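/- Local slice theorem, part (b): With s a local slice of degree d and denominator c, let ψ: R_c → (R_c)^{G_a}[x] be the inverse of x ↦ s, and π: R_c → (R_c)^{G_a} the composition of ψ with evaluation at x = 0. Then π is a surjective homomorphism of (R_c)^{G_a}-algebras with kernel the principal ideal (s), and for every a ∈ R_c, π(a) equals the remainder of φ(a) upon division by φ(s) in R_c[z] (the remainder having z-degree 0). -/

import Mathlib

open Polynomial

def IsGaCoaction {R : Type*} [CommRing R] (φ : R →+* Polynomial R) : Prop :=
  (∀ s : R, (φ s).eval 0 = s) ∧
  (∀ s : R, (φ s).map φ =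
      (φ s).eval₂ ((Polynomial.C : Polynomial R →+* Polynomial (Polynomial R)).comp
        Polynomial.C) (Polynomial.X + Polynomial.C Polynomial.X))

lemma degree_eval₂_CC_le {A : Type*} [CommRing A] (p : Polynomial A) :
    (p.eval₂ ((Polynomial.C : Polynomial A →+* Polynomial (Polynomial A)).comp Polynomial.C)
      (Polynomial.X + Polynomial.C Polynomial.X)).degree ≤ p.degree := by
  rw [eval₂_eq_sum, Polynomial.sum]
  refine (degree_sum_le _ _).trans ?_
  refine Finset.sup_le fun i hi => ?_
  refine le_trans ?_ (le_degree_of_ne_zero (mem_support_iff.mp hi))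
  refine (degree_mul_le _ _).trans ?_
  have h1 : ((X + C X : Polynomial (Polynomial A))).degree ≤ 1 :=
    (degree_add_le _ _).trans (max_le degree_X_le (degree_C_le.trans (by norm_num)))
  have h2 : (((X + C X : Polynomial (Polynomial A)))^i).degree ≤ (i : WithBot ℕ) := by
    refine (degree_pow_le _ i).trans ?_
    calc i • ((X + C X : Polynomial (Polynomial A))).degree ≤ i • (1 : WithBot ℕ) :=
          nsmul_le_nsmul_right h1 i
      _ = (i : WithBot ℕ) := by simp [nsmul_eq_mul]
  calc degree _ + degree _ ≤ 0 + (i : WithBot ℕ) := add_le_add degree_C_le h2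
    _ = (i : WithBot ℕ) := zero_add _

/-- Abstract core of the local slice theorem, part (b), over an arbitrary commutative ring. -/
lemma stmt6_aux {A : Type*} [CommRing A] [Nontrivial A]
    (φc : A →+* Polynomial A)
    (hcounit : ∀ a : A, (φc a).eval 0 = a)
    (hcoassoc : ∀ a : A, (φc a).map φc =
      (φc a).eval₂ ((Polynomial.C : Polynomial A →+* Polynomial (Polynomial A)).comp
        Polynomial.C) (Polynomial.X + Polynomial.C Polynomial.X))
    (s₀ : A) (u : Aˣ) (hlcS : (φc s₀).leadingCoeff = (u : A))
    (d : WithBot ℕ) (hdegS : (φc s₀).degree = d) (hd0 : 0 < d)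
    (hslice : ∀ a : A, (φc a).degree < d → φc a = Polynomial.C a) :
    ∃ π : A →+* A,
      (∀ a : A, φc (π a) = Polynomial.C (π a)) ∧
      (∀ a : A, φc a = Polynomial.C a → π a = a) ∧
      RingHom.ker π = Ideal.span {s₀} ∧
      (∀ a : A, ∃ q : Polynomial A, φc a = q * φc s₀ + Polynomial.C (π a)) := by
  set S : Polynomial A := φc s₀ with hSdef
  set M : Polynomial A := C (↑u⁻¹ : A) * S with hMdef
  have hlcM : M.leadingCoeff = 1 := by
    rw [hMdef, leadingCoeff_mul', leadingCoeff_C, hlcS, Units.inv_mul]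
    rw [leadingCoeff_C, hlcS, Units.inv_mul]
    exact one_ne_zero
  have hM : M.Monic := hlcM
  have hdegM : M.degree = S.degree := by
    rw [hMdef, degree_mul'
        (by rw [leadingCoeff_C, hlcS, Units.inv_mul]; exact one_ne_zero),
      degree_C u⁻¹.ne_zero, zero_add]
  have hdegM0 : 0 < M.degree := by rw [hdegM, hdegS]; exact hd0
  -- the key lemma
  have key : ∀ a : A, (φc a) %ₘ M = C (((φc a) %ₘ M).coeff 0) ∧
      φc (((φc a) %ₘ M).coeff 0) = C (((φc a) %ₘ M).coeff 0) := by
    intro a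
    set P := φc a with hP
    set Q := P /ₘ M with hQ
    set Rr := P %ₘ M with hRr
    have hdivRr : Rr.degree < M.degree := degree_modByMonic_lt P hM
    have hdiv : Rr + M * Q = P := modByMonic_add_div P M
    have hPeq : P = S * (C (↑u⁻¹ : A) * Q) + Rr := by
      rw [← hdiv, hMdef]; ring
    set Q' := C (↑u⁻¹ : A) * Q with hQ'
    set α := mapRingHom φc with hα
    set β := (eval₂RingHom ((C : Polynomial A →+* Polynomial (Polynomial A)).comp C)
      (X + C X)) with hβ
    have hαP := congrArg α hPeq
    have hβP := congrArg β hPeq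
    simp only [map_add, map_mul] at hαP hβP
    have hSinv : α S = β S := hcoassoc s₀
    have hPinv : α P = β P := hcoassoc a
    -- degrees
    have hdegαRr : (α Rr).degree < S.degree := by
      have h1 : (α Rr).degree ≤ Rr.degree := degree_map_le
      exact lt_of_le_of_lt h1 (hdegM ▸ hdivRr)
    have hdegβRr : (β Rr).degree < S.degree := by
      have h1 : (β Rr).degree ≤ Rr.degree := degree_eval₂_CC_le Rr
      exact lt_of_le_of_lt h1 (hdegM ▸ hdivRr)
    have hu : IsUnit ((u : A)) := u.isUnit
    have hlcS_ne : φc S.leadingCoeff ≠ 0 := by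
      rw [hlcS]; exact (hu.map φc).ne_zero
    have hdegαS : (α S).degree = S.degree := by
      exact degree_map_eq_of_leadingCoeff_ne_zero _ hlcS_ne
    have hlcαS : IsUnit ((α S).leadingCoeff) := by
      show IsUnit ((S.map φc).leadingCoeff)
      rw [leadingCoeff_map_of_leadingCoeff_ne_zero _ hlcS_ne, hlcS]
      exact hu.map φc
    have hQQ' : α Q' = β Q' := by
      by_contra hne
      have hD : α Q' - β Q' ≠ 0 := sub_ne_zero.mpr hne
      have heq : α S * (α Q' - β Q') = β Rr - α Rr := by
        have h5 : α S * α Q' + α Rr = α S * β Q' + β Rr := by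
          rw [← hαP, hPinv, hβP, hSinv]
        linear_combination h5
      have hlt : (β Rr - α Rr).degree < S.degree :=
        lt_of_le_of_lt (degree_sub_le _ _) (max_lt hdegβRr hdegαRr)
      rw [← heq] at hlt
      have hmul : (α S * (α Q' - β Q')).degree = (α S).degree + (α Q' - β Q').degree := by
        apply degree_mul'
        intro h0
        exact hD (leadingCoeff_eq_zero.mp ((hlcαS.mul_right_eq_zero).mp h0))
      rw [hmul, hdegαS] at hlt
      have : S.degree ≤ S.degree + (α Q' - β Q').degree :=
        le_add_of_nonneg_right (zero_le_degree_iff.mpr hD)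
      exact absurd (lt_of_le_of_lt this hlt) (lt_irrefl _)
    have hRreq : α Rr = β Rr := by
      have h5 : α S * α Q' + α Rr = α S * β Q' + β Rr := by
        rw [← hαP, hPinv, hβP, hSinv]
      linear_combination h5 - α S * hQQ'
    -- evaluate outer variable at 0
    have heval : φc (Rr.coeff 0) = Rr := by
      have h1 : (α Rr).eval 0 = φc (Rr.eval 0) := by
        rw [hα, coe_mapRingHom, eval_zero_map]
      have h2 : (β Rr).eval 0 = Rr := by
        show (Rr.eval₂ ((C : Polynomial A →+* Polynomial (Polynomial A)).comp C)
          (X + C X)).eval 0 = Rr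
        have h3 := hom_eval₂ Rr
          ((C : Polynomial A →+* Polynomial (Polynomial A)).comp C)
          (evalRingHom (0 : Polynomial A)) (X + C X)
        have h4 : (evalRingHom (0 : Polynomial A)).comp
            ((C : Polynomial A →+* Polynomial (Polynomial A)).comp C)
            = (C : A →+* Polynomial A) := by
          ext a
          simp
        have h5 : (evalRingHom (0 : Polynomial A)) (X + C X) = X := by
          simp
        rw [show ((Rr.eval₂ ((C : Polynomial A →+* Polynomial (Polynomial A)).comp C)
          (X + C X)).eval 0) = (evalRingHom (0 : Polynomial A))
          (Rr.eval₂ ((C : Polynomial A →+* Polynomial (Polynomial A)).comp C) (X + C X)) from rfl,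
          h3, h4, h5, eval₂_C_X]
      rw [coeff_zero_eq_eval_zero, ← h1, hRreq, h2]
    have hcoeff : φc (Rr.coeff 0) = C (Rr.coeff 0) := by
      apply hslice
      rw [heval, ← hdegS, ← hdegM]
      exact hdivRr
    exact ⟨heval.symm.trans hcoeff, hcoeff⟩
  -- the retraction as a function
  set π₀ : A → A := fun a => ((φc a) %ₘ M).coeff 0 with hπ₀
  have hmod : ∀ a : A, (φc a) %ₘ M = C (π₀ a) := fun a => (key a).1
  have hinv : ∀ a : A, φc (π₀ a) = C (π₀ a) := fun a => (key a).2
  have hdivC : ∀ x : A, degree (C x) < M.degree := fun x =>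
    lt_of_le_of_lt degree_C_le hdegM0
  have hdecomp : ∀ a : A, C (π₀ a) + M * (φc a /ₘ M) = φc a := by
    intro a
    rw [← hmod a]
    exact modByMonic_add_div (φc a) M
  -- π₀ is a ring homomorphism
  have hone : π₀ 1 = 1 := by
    have h1 : (φc 1) %ₘ M = 1 := by
      rw [map_one]
      exact (modByMonic_eq_self_iff hM).mpr (by rw [degree_one]; exact hdegM0)
    rw [hπ₀]
    simp only [h1, coeff_one_zero]
  have hmul : ∀ a b : A, π₀ (a * b) = π₀ a * π₀ b := by
    intro a b
    have ha := hdecomp a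
    have hb := hdecomp b
    generalize hQa : φc a /ₘ M = Qa at ha
    generalize hQb : φc b /ₘ M = Qb at hb
    have h1 : C (π₀ a * π₀ b) + M * (C (π₀ a) * Qb + Qa * C (π₀ b)
        + Qa * M * Qb) = φc (a * b) := by
      rw [show φc (a * b) = φc a * φc b from map_mul φc a b, ← ha, ← hb,
        show (C (π₀ a * π₀ b) : Polynomial A) = C (π₀ a) * C (π₀ b) from map_mul C _ _]
      ring
    have h2 := (div_modByMonic_unique _ _ hM ⟨h1, hdivC _⟩).2
    rw [hπ₀]
    simp only [h2, coeff_C_zero]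
    rfl
  have hadd : ∀ a b : A, π₀ (a + b) = π₀ a + π₀ b := by
    intro a b
    rw [hπ₀]
    simp only [map_add, add_modByMonic, coeff_add]
  have hzero : π₀ 0 = 0 := by
    rw [hπ₀]
    simp only [map_zero, zero_modByMonic, coeff_zero]
  let π : A →+* A := ⟨⟨⟨π₀, hone⟩, hmul⟩, hzero, hadd⟩
  have hπa : ∀ a : A, π a = π₀ a := fun _ => rfl
  refine ⟨π, fun a => by rw [hπa]; exact hinv a, ?_, ?_, ?_⟩
  · -- fixes invariants
    intro a ha
    rw [hπa, hπ₀]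
    simp only [ha, (modByMonic_eq_self_iff hM).mpr (hdivC a), coeff_C_zero]
  · -- kernel
    have hπs : π₀ s₀ = 0 := by
      have h1 : (0 : Polynomial A) + M * C (u : A) = φc s₀ := by
        rw [hMdef]
        rw [show (C (↑u⁻¹ : A) * S) * C (u : A) = S * C ((↑u⁻¹ : A) * (u : A)) by
          rw [map_mul]; ring, Units.inv_mul, map_one, mul_one, zero_add]
      have h2 := (div_modByMonic_unique _ _ hM ⟨h1, by
        rw [degree_zero]; exact lt_of_le_of_lt bot_le hdegM0⟩).2
      rw [hπ₀]
      simp only [h2, coeff_zero]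
    apply le_antisymm
    · -- ker ≤ span
      intro a ha
      have ha' : π₀ a = 0 := by rw [← hπa]; exact RingHom.mem_ker.mp ha
      have hda := hdecomp a
      generalize hQa : φc a /ₘ M = Qa at hda
      have h1 : φc a = M * Qa := by
        rw [ha', map_zero, zero_add] at hda
        exact hda.symm
      have h2 : a = ((↑u⁻¹ : A) * (Qa.eval 0)) * s₀ := by
        have h3 := hcounit a
        rw [h1, hMdef] at h3
        have h4 : S.eval 0 = s₀ := hcounit s₀
        simp only [eval_mul, eval_C, h4] at h3
        rw [← h3]
        ring
      rw [Ideal.mem_span_singleton]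
      exact ⟨_, h2.trans (mul_comm _ _)⟩
    · -- span ≤ ker
      rw [Ideal.span_le, Set.singleton_subset_iff]
      exact RingHom.mem_ker.mpr ((hπa s₀).trans hπs)
  · -- division formula
    intro a
    have hda := hdecomp a
    generalize hQa : φc a /ₘ M = Qa at hda
    refine ⟨C (↑u⁻¹ : A) * Qa, ?_⟩
    rw [hπa, ← hda, hMdef]
    ring

/-- local slice theorem, part (b): there is a retraction
`π : R_c → (R_c)^{G_a}` (here given as a ring endomorphism of `R_c` landing in the
invariants and restricting to the identity on them, hence a surjective homomorphism of
`(R_c)^{G_a}`-algebras onto the invariants), whose kernel is the principal ideal `(s)`,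
and such that for every `a`, `π(a)` is the remainder (of `z`-degree `0`) of the division
of `φ(a)` by `φ(s)` in `R_c[z]`. -/
theorem stmt6 {K R : Type*} [CommRing K] [CommRing R] [Algebra K R]
    (φ : R →ₐ[K] Polynomial R) (hφ : IsGaCoaction φ.toRingHom)
    (s : R) (hs : φ s ≠ Polynomial.C s)
    (c : R) (hc : c = (φ s).leadingCoeff)
    (φc : Localization.Away c →+* Polynomial (Localization.Away c))
    (hext : ∀ r : R, φc (algebraMap R (Localization.Away c) r) =
      (φ r).map (algebraMap R (Localization.Away c)))
    (hslice : ∀ a : Localization.Away c,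
      (φc a).degree < (φ s).degree → φc a = Polynomial.C a) :
    ∃ π : Localization.Away c →+* Localization.Away c,
      (∀ a : Localization.Away c, φc (π a) = Polynomial.C (π a)) ∧
      (∀ a : Localization.Away c, φc a = Polynomial.C a → π a = a) ∧
      RingHom.ker π = Ideal.span {algebraMap R (Localization.Away c) s} ∧
      (∀ a : Localization.Away c, ∃ q : Polynomial (Localization.Away c),
        φc a = q * φc (algebraMap R (Localization.Away c) s) + Polynomial.C (π a)) := by
  rcases subsingleton_or_nontrivial (Localization.Away c) with hss | hnt
  · refine ⟨RingHom.id _, fun a => Subsingleton.elim _ _, fun a _ => Subsingleton.elim _ _,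
      ?_, fun a => ⟨0, Subsingleton.elim _ _⟩⟩
    ext x
    simp only [RingHom.mem_ker, RingHom.id_apply]
    constructor
    · intro _
      rw [Subsingleton.elim x (0 : Localization.Away c)]
      exact zero_mem _
    · intro _
      exact Subsingleton.elim _ _
  set A := Localization.Away c with hA
  let alg : R →+* A := algebraMap R A
  -- counit for φc
  have hcounit : ∀ a : A, (φc a).eval 0 = a := by
    have : (evalRingHom (0 : A)).comp φc = RingHom.id A := by
      apply IsLocalization.ringHom_ext (Submonoid.powers c)
      ext r
      simp only [RingHom.comp_apply, RingHom.id_apply, coe_evalRingHom]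
      rw [hext r, eval_zero_map]
      exact congrArg alg (hφ.1 r)
    intro a
    have := congrArg (fun f => f a) this
    exact this
  -- coassociativity for φc
  have hcoassoc : ∀ a : A, (φc a).map φc =
      (φc a).eval₂ ((C : Polynomial A →+* Polynomial (Polynomial A)).comp C) (X + C X) := by
    have hcomp : ((mapRingHom φc).comp φc).comp (algebraMap R A) =
        ((eval₂RingHom (S := Polynomial (Polynomial A)) ((C : Polynomial A →+* Polynomial (Polynomial A)).comp C)
          (X + C X)).comp φc).comp (algebraMap R A) := by
      have hring : φc.comp (algebraMap R A) = (mapRingHom alg).comp φ.toRingHom :=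
        RingHom.ext fun x => hext x
      apply RingHom.ext
      intro r
      simp only [RingHom.comp_apply, coe_mapRingHom, coe_eval₂RingHom]
      rw [hext r]
      have h1 : (((φ r).map alg).map φc) = (((φ r).map φ.toRingHom).map (mapRingHom alg)) := by
        rw [map_map, map_map, hring]
      have hφ2 : ((φ r : Polynomial R).map φ.toRingHom) = (φ r).eval₂
          ((C : Polynomial R →+* Polynomial (Polynomial R)).comp C) (X + C X) := hφ.2 r
      rw [h1, hφ2, ← coe_mapRingHom (mapRingHom alg), hom_eval₂, eval₂_map]
      congr 1
      · ext x
        simp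
        rfl
      · simp
    have hFG := IsLocalization.ringHom_ext (S := A) (P := Polynomial (Polynomial A)) (Submonoid.powers c) hcomp
    intro a
    exact congrArg (fun f => f a) hFG
  -- basics
  have hd0 : 0 < (φ s).degree := by
    by_contra h
    push_neg at h
    apply hs
    have h2 := eq_C_of_degree_le_zero h
    have h3 : (φ s).eval 0 = s := hφ.1 s
    rwa [coeff_zero_eq_eval_zero, h3] at h2
  obtain hu := IsLocalization.Away.algebraMap_isUnit (S := A) c
  set u : Aˣ := hu.unit with hu'
  have huval : (u : A) = alg c := rfl
  have hSfc : φc (alg s) = (φ s).map alg := hext s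
  have hlcS : (φc (alg s)).leadingCoeff = (u : A) := by
    rw [hSfc, leadingCoeff_map_of_leadingCoeff_ne_zero, ← hc, huval]
    rw [← hc, ← huval]
    exact u.ne_zero
  have hdegS : (φc (alg s)).degree = (φ s).degree := by
    rw [hSfc]
    apply degree_map_eq_of_leadingCoeff_ne_zero
    rw [← hc, ← huval]
    exact u.ne_zero
  exact stmt6_aux φc hcounit hcoassoc (alg s) u hlcS (φ s).degree hdegS hd0 hslice
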